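/- arXiv:1509.03846 — 2 statements merged into one kernel-verified Lean document; each statement's English description precedes it below -/
import Mathlib

section
/- If z: [0, π] → ℝ is nonnegative and periodic with period π/3 (i.e., z(α + π/3) = z(α) whenever both arguments lie in [0, π], extended periodically), then ∫₀^π z(α)·|cos(π/2 − α)| dα = ∫₀^π z(α)·|cos(π/6 − α)| dα, and similarly ∫₀^π z(α)·|cos(5π/6 − α)| dα = ∫₀^π z(α)·|cos(π/6 − α)| dα. -/
open Real MeasureTheory

lemma shift_step (z : ℝ → ℝ) (hper : ∀ α, z (α + π/3) = z α) (γ : ℝ) :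
    (∫ α in (0:ℝ)..π, z α * |Real.cos (γ + π/3 - α)|) =
      (∫ α in (0:ℝ)..π, z α * |Real.cos (γ - α)|) := by
  have hπ : Function.Periodic (fun α => z α * |Real.cos (γ - α)|) π := by
    intro x
    simp only
    have hz : z (x + π) = z x := by
      rw [show x + π = x + π/3 + π/3 + π/3 by ring, hper, hper, hper]
    rw [hz]
    congr 1
    rw [show γ - (x + π) = (γ - x) - π by ring, Real.cos_sub_pi, abs_neg]
  have key := hπ.intervalIntegral_add_eq (-(π/3)) 0
  have sub := intervalIntegral.integral_comp_add_right (a := -(π/3)) (b := -(π/3) + π)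
      (fun α => z α * |Real.cos (γ + π/3 - α)|) (π/3)
  have congr1 : (∫ x in (-(π/3))..(-(π/3) + π), z (x + π/3) * |Real.cos (γ + π/3 - (x + π/3))|)
      = ∫ x in (-(π/3))..(-(π/3) + π), z x * |Real.cos (γ - x)| := by
    apply intervalIntegral.integral_congr
    intro x _
    show z (x + π/3) * |Real.cos (γ + π/3 - (x + π/3))| = z x * |Real.cos (γ - x)|
    rw [hper x, show γ + π/3 - (x + π/3) = γ - x by ring]
  rw [congr1, key] at sub
  rw [show -(π/3) + π/3 = (0:ℝ) by ring, show -(π/3) + π + π/3 = π by ring] at sub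
  rw [← sub]
  norm_num

theorem periodic_weight_integral_eq (z : ℝ → ℝ)
    (hpos : ∀ α, 0 ≤ z α) (hper : ∀ α, z (α + π/3) = z α) :
    (∫ α in (0:ℝ)..π, z α * |Real.cos (π/2 - α)|) =
      (∫ α in (0:ℝ)..π, z α * |Real.cos (π/6 - α)|) ∧
    (∫ α in (0:ℝ)..π, z α * |Real.cos (5*π/6 - α)|) =
      (∫ α in (0:ℝ)..π, z α * |Real.cos (π/6 - α)|) := by
  have h1 := shift_step z hper (π/6)
  have h2 := shift_step z hper (π/2)
  rw [show π/6 + π/3 = π/2 by ring] at h1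
  rw [show π/2 + π/3 = 5*π/6 by ring] at h2
  exact ⟨h1, h2.trans h1⟩
end

section
/- Let B be a {π/6, π/2, 5π/6}-restricted set of segments (every segment has direction angle π/6, π/2, or 5π/6) satisfying the projection-cover condition for the unit equilateral triangle U: for every α ∈ [0,π], |U(α)| ≤ |B_{π/6}|·|cos(π/6 − α)| + |B_{π/2}|·|cos(π/2 − α)| + |B_{5π/6}|·|cos(5π/6 − α)|, where |B_φ| is the total length of segments of angle φ. Then |B_{π/6}| + |B_{π/2}| + |B_{5π/6}| ≥ √3. -/
open Real MeasureTheory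

noncomputable def proj (α : ℝ) (X : Set (ℝ × ℝ)) : Set ℝ :=
  (fun p : ℝ × ℝ => p.1 * Real.cos α + p.2 * Real.sin α) '' X

noncomputable def U : Set (ℝ × ℝ) :=
  convexHull ℝ {((0:ℝ), (0:ℝ)), (1, 0), (1/2, Real.sqrt 3 / 2)}

lemma isLinear (α : ℝ) : IsLinearMap ℝ (fun p : ℝ × ℝ => p.1 * Real.cos α + p.2 * Real.sin α) := by
  constructor
  · intro x y; simp; ring
  · intro t x; simp; ring

lemma proj_eq (α : ℝ) : proj α U =
    convexHull ℝ {(0:ℝ), Real.cos α, (1/2) * Real.cos α + (Real.sqrt 3 / 2) * Real.sin α} := by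
  rw [proj, U, (isLinear α).image_convexHull]
  congr 1
  simp [Set.image_insert_eq]

lemma hull_eq_Icc (x y z u v : ℝ) (hx : x ∈ Set.Icc u v) (hy : y ∈ Set.Icc u v)
    (hz : z ∈ Set.Icc u v) (hu : u ∈ ({x, y, z} : Set ℝ)) (hv : v ∈ ({x, y, z} : Set ℝ))
    (huv : u ≤ v) :
    convexHull ℝ ({x, y, z} : Set ℝ) = Set.Icc u v := by
  apply le_antisymm
  · exact convexHull_min (by intro w hw; rcases hw with rfl | rfl | rfl <;> assumption) (convex_Icc u v)
  · rw [← segment_eq_Icc huv]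
    exact segment_subset_convexHull hu hv

lemma vol_one (α : ℝ) (h : proj α U = Set.Icc 0 1 ∨ proj α U = Set.Icc (-(1/2)) (1/2)) :
    (volume (proj α U)).toReal = 1 := by
  rcases h with h | h <;> rw [h] <;> simp [Real.volume_Icc] <;> norm_num

theorem restricted_barrier_sqrt_three (a b c : ℝ)
    (ha : 0 ≤ a) (hb : 0 ≤ b) (hc : 0 ≤ c)
    (hcov : ∀ α ∈ Set.Icc (0:ℝ) π,
      (volume (proj α U)).toReal ≤
        a * |Real.cos (π/6 - α)| + b * |Real.cos (π/2 - α)| + c * |Real.cos (5*π/6 - α)|) :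
    Real.sqrt 3 ≤ a + b + c := by
  have s3 : Real.sqrt 3 ^ 2 = 3 := Real.sq_sqrt (by norm_num)
  have s3pos : 0 < Real.sqrt 3 := Real.sqrt_pos.2 (by norm_num)
  have s3lt : Real.sqrt 3 < 2 := by nlinarith
  have pipos := Real.pi_pos
  -- α = 0
  have h0 : proj 0 U = Set.Icc 0 1 := by
    rw [proj_eq]
    simp only [Real.cos_zero, Real.sin_zero]
    norm_num
    have := hull_eq_Icc 0 1 (1/2) 0 1 (by norm_num) (by norm_num) (by norm_num)
      (by simp) (by simp) (by norm_num)
    simpa using this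
  have e0 := hcov 0 ⟨le_refl 0, le_of_lt pipos⟩
  rw [vol_one 0 (Or.inl h0)] at e0
  have c6 : Real.cos (π/6 - 0) = Real.sqrt 3 / 2 := by
    rw [sub_zero]; exact Real.cos_pi_div_six
  have c2 : Real.cos (π/2 - 0) = 0 := by rw [sub_zero]; exact Real.cos_pi_div_two
  have c56 : Real.cos (5*π/6 - 0) = -(Real.sqrt 3 / 2) := by
    rw [sub_zero]
    have : 5*π/6 = π - π/6 := by ring
    rw [this, Real.cos_pi_sub, Real.cos_pi_div_six]
  rw [c6, c2, c56, abs_neg, abs_of_nonneg (by positivity), abs_zero] at e0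
  -- α = π/3
  have h1 : proj (π/3) U = Set.Icc 0 1 := by
    rw [proj_eq]
    rw [Real.cos_pi_div_three, Real.sin_pi_div_three]
    have hz : 1/2 * (1/2 : ℝ) + Real.sqrt 3 / 2 * (Real.sqrt 3 / 2) = 1 := by nlinarith
    rw [hz]
    have := hull_eq_Icc 0 (1/2) 1 0 1 (by norm_num) (by norm_num) (by norm_num)
      (by simp) (by simp) (by norm_num)
    simpa using this
  have e1 := hcov (π/3) ⟨by positivity, by linarith⟩
  rw [vol_one _ (Or.inl h1)] at e1
  have d6 : Real.cos (π/6 - π/3) = Real.sqrt 3 / 2 := by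
    have : π/6 - π/3 = -(π/6) := by ring
    rw [this, Real.cos_neg, Real.cos_pi_div_six]
  have d2 : Real.cos (π/2 - π/3) = Real.sqrt 3 / 2 := by
    have : π/2 - π/3 = π/6 := by ring
    rw [this, Real.cos_pi_div_six]
  have d56 : Real.cos (5*π/6 - π/3) = 0 := by
    have : 5*π/6 - π/3 = π/2 := by ring
    rw [this, Real.cos_pi_div_two]
  rw [d6, d2, d56, abs_of_nonneg (by positivity), abs_zero] at e1
  -- α = 2π/3
  have hcos23 : Real.cos (2*π/3) = -(1/2) := by
    have : 2*π/3 = π - π/3 := by ring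
    rw [this, Real.cos_pi_sub, Real.cos_pi_div_three]
  have hsin23 : Real.sin (2*π/3) = Real.sqrt 3 / 2 := by
    have : 2*π/3 = π - π/3 := by ring
    rw [this, Real.sin_pi_sub, Real.sin_pi_div_three]
  have h2 : proj (2*π/3) U = Set.Icc (-(1/2)) (1/2) := by
    rw [proj_eq, hcos23, hsin23]
    have hz : 1/2 * (-(1/2) : ℝ) + Real.sqrt 3 / 2 * (Real.sqrt 3 / 2) = 1/2 := by nlinarith
    rw [hz]
    have := hull_eq_Icc 0 (-(1/2)) (1/2) (-(1/2)) (1/2) (by norm_num) (by norm_num) (by norm_num)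
      (by simp) (by simp) (by norm_num)
    simpa using this
  have e2 := hcov (2*π/3) ⟨by positivity, by linarith⟩
  rw [vol_one _ (Or.inr h2)] at e2
  have f6 : Real.cos (π/6 - 2*π/3) = 0 := by
    have : π/6 - 2*π/3 = -(π/2) := by ring
    rw [this, Real.cos_neg, Real.cos_pi_div_two]
  have f2 : Real.cos (π/2 - 2*π/3) = Real.sqrt 3 / 2 := by
    have : π/2 - 2*π/3 = -(π/6) := by ring
    rw [this, Real.cos_neg, Real.cos_pi_div_six]
  have f56 : Real.cos (5*π/6 - 2*π/3) = Real.sqrt 3 / 2 := by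
    have : 5*π/6 - 2*π/3 = π/6 := by ring
    rw [this, Real.cos_pi_div_six]
  rw [f6, f2, f56, abs_zero, abs_of_nonneg (by positivity)] at e2
  nlinarith [e0, e1, e2]
end
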